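/- Let g̃ = [[εc, d],[εa, εb]] and g̃' = [[εc', d'],[εa', εb']] with a, d, a', d' ∈ O* and b, c, b', c' ∈ O, and suppose that b + c = b' + c' and ad − εbc = a'd' − εb'c' (equivalently, g̃ and g̃' have the same trace and the same determinant). Then the matrix r = [[1, (c'−c)/a],[0, a'/a]] lies in I¹ and satisfies r·g̃ = g̃'·r. -/

import Mathlib

noncomputable section

/-- The valuation `v` on `K = k((ε))`, with `v 0 = ∞`. -/
def lv {k : Type*} [Field k] (x : LaurentSeries k) : WithTop ℤ := x.orderTop

/-- The uniformizer `ε` of `k((ε))`. -/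
def eps (k : Type*) [Field k] : LaurentSeries k := HahnSeries.single (1 : ℤ) 1

/-- The set `I¹` of matrices `[[a,b],[c,d]]` with `v a = v d = m`, `v b ≥ m`, `v c > m`
for some `m ∈ ℤ`. -/
def I1 (k : Type*) [Field k] : Set (Matrix (Fin 2) (Fin 2) (LaurentSeries k)) :=
  {g | ∃ m : ℤ, lv (g 0 0) = (m : WithTop ℤ) ∧ lv (g 1 1) = (m : WithTop ℤ) ∧
    (m : WithTop ℤ) ≤ lv (g 0 1) ∧ (m : WithTop ℤ) < lv (g 1 0)}

theorem statement3 (k : Type*) [Field k] [IsAlgClosed k]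
    (a b c d a' b' c' d' : LaurentSeries k)
    (ha : lv a = 0) (hd : lv d = 0) (hb : 0 ≤ lv b) (hc : 0 ≤ lv c)
    (ha' : lv a' = 0) (hd' : lv d' = 0) (hb' : 0 ≤ lv b') (hc' : 0 ≤ lv c')
    (htr : b + c = b' + c')
    (hdet : a * d - eps k * (b * c) = a' * d' - eps k * (b' * c')) :
    !![1, (c' - c) / a; 0, a' / a] ∈ I1 k ∧
    !![1, (c' - c) / a; 0, a' / a] * !![eps k * c, d; eps k * a, eps k * b]
      = !![eps k * c', d'; eps k * a', eps k * b'] * !![1, (c' - c) / a; 0, a' / a] := by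
  set V := HahnSeries.addVal ℤ k with hV
  have hVlv : ∀ x : LaurentSeries k, V x = lv x := fun x => HahnSeries.addVal_apply
  have ha0 : a ≠ 0 := by
    intro h
    rw [h] at ha
    simp [lv] at ha
  constructor
  · refine ⟨0, ?_, ?_, ?_, ?_⟩
    · simpa [lv] using HahnSeries.orderTop_one
    · rw [show (!![1, (c' - c) / a; 0, a' / a] : Matrix (Fin 2) (Fin 2) (LaurentSeries k)) 1 1
        = a' / a by simp]
      rw [← hVlv, V.map_div, hVlv, hVlv, ha, ha']
      simp
    · rw [show (!![1, (c' - c) / a; 0, a' / a] : Matrix (Fin 2) (Fin 2) (LaurentSeries k)) 0 1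
        = (c' - c) / a by simp]
      rw [← hVlv, V.map_div, hVlv a, ha]
      have h1 : (0 : WithTop ℤ) ≤ V (c' - c) := by
        refine V.map_le_sub ?_ ?_ <;> rw [hVlv] <;> assumption
      simpa using h1
    · simp [lv]
  · refine Matrix.ext fun i j => ?_
    fin_cases i <;> fin_cases j <;>
      simp only [Matrix.mul_apply, Fin.sum_univ_two, Matrix.cons_val', Matrix.cons_val_zero,
        Matrix.cons_val_one, Matrix.head_cons, Matrix.empty_val', Matrix.cons_val_fin_one,
        Matrix.head_fin_const, Matrix.of_apply, Fin.zero_eta, Fin.mk_one]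
    · field_simp
      ring
    · field_simp
      linear_combination hdet + eps k * c' * htr
    · field_simp
      ring
    · field_simp
      linear_combination eps k * a' * htr
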